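/- Under the setting below, the objective function f(x) = E_{ε∼P_ε}[φ(x, c(x) + Q(x)ε)] is τ-weakly convex on 𝒪 with τ = L_φ(L_c + ℓ·L_q); that is, x ↦ f(x) + (τ/2)‖x‖² is convex on 𝒪. (Proposition 3.) -/

import Mathlib

open MeasureTheory
open scoped RealInnerProductSpace

noncomputable section

/-- Quadratic Taylor bound for a `C¹` function with `L`-Lipschitz derivative. -/
lemma taylor_quad {E F : Type*} [NormedAddCommGroup E] [NormedSpace ℝ E]
    [NormedAddCommGroup F] [NormedSpace ℝ F] [CompleteSpace F]
    {O : Set E} (hconv : Convex ℝ O)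
    {g : E → F} {L : ℝ} (hL : 0 ≤ L)
    (hdiff : ∀ z ∈ O, DifferentiableAt ℝ g z)
    (hLip : ∀ x ∈ O, ∀ y ∈ O, ‖fderiv ℝ g x - fderiv ℝ g y‖ ≤ L * ‖x - y‖)
    {x y : E} (hx : x ∈ O) (hy : y ∈ O) :
    ‖g y - g x - fderiv ℝ g x (y - x)‖ ≤ L / 2 * ‖y - x‖ ^ 2 := by
  set γ : ℝ → E := fun s => x + s • (y - x) with hγdef
  have hγmem : ∀ s ∈ Set.Icc (0:ℝ) 1, γ s ∈ O := by
    intro s hs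
    simpa [hγdef] using hconv.add_smul_sub_mem hx hy hs
  set F' : ℝ → F := fun s => fderiv ℝ g (γ s) (y - x) with hF'def
  have hγd : ∀ s : ℝ, HasDerivAt γ (y - x) s := by
    intro s
    simpa [hγdef] using ((hasDerivAt_id s).smul_const (y - x)).const_add x
  have hder : ∀ s ∈ Set.uIcc (0:ℝ) 1, HasDerivAt (fun t => g (γ t)) (F' s) s := by
    intro s hs
    rw [Set.uIcc_of_le zero_le_one] at hs
    exact ((hdiff _ (hγmem s hs)).hasFDerivAt.comp_hasDerivAt s (hγd s))
  have hF'lip : ∀ s ∈ Set.Icc (0:ℝ) 1, ∀ t ∈ Set.Icc (0:ℝ) 1,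
      ‖F' s - F' t‖ ≤ (L * ‖y - x‖ ^ 2) * |s - t| := by
    intro s hs t ht
    have h1 : ‖F' s - F' t‖ ≤ ‖fderiv ℝ g (γ s) - fderiv ℝ g (γ t)‖ * ‖y - x‖ := by
      simpa [hF'def] using
        ((fderiv ℝ g (γ s) - fderiv ℝ g (γ t)).le_opNorm (y - x))
    have h2 : ‖fderiv ℝ g (γ s) - fderiv ℝ g (γ t)‖ ≤ L * (|s - t| * ‖y - x‖) := by
      have := hLip _ (hγmem s hs) _ (hγmem t ht)
      have hγst : γ s - γ t = (s - t) • (y - x) := by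
        simp [hγdef, sub_smul]
      simpa [hγst, norm_smul, Real.norm_eq_abs] using this
    calc ‖F' s - F' t‖ ≤ (L * (|s - t| * ‖y - x‖)) * ‖y - x‖ :=
          h1.trans (by exact mul_le_mul_of_nonneg_right h2 (norm_nonneg _))
      _ = (L * ‖y - x‖ ^ 2) * |s - t| := by ring
  have hF'cont : ContinuousOn F' (Set.Icc (0:ℝ) 1) := by
    have : LipschitzOnWith (L * ‖y - x‖ ^ 2).toNNReal F' (Set.Icc (0:ℝ) 1) := by
      rw [lipschitzOnWith_iff_dist_le_mul]
      intro s hs t ht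
      rw [dist_eq_norm, Real.dist_eq]
      refine (hF'lip s hs t ht).trans ?_
      gcongr
      exact Real.le_coe_toNNReal _
    exact this.continuousOn
  have hint : IntervalIntegrable F' volume 0 1 := by
    apply ContinuousOn.intervalIntegrable
    rwa [Set.uIcc_of_le zero_le_one]
  have hFTC : ∫ s in (0:ℝ)..1, F' s = g (γ 1) - g (γ 0) :=
    intervalIntegral.integral_eq_sub_of_hasDerivAt hder hint
  have hγ0 : γ 0 = x := by simp [hγdef]
  have hγ1 : γ 1 = y := by simp [hγdef]
  have key : g y - g x - fderiv ℝ g x (y - x) = ∫ s in (0:ℝ)..1, (F' s - F' 0) := by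
    rw [intervalIntegral.integral_sub hint intervalIntegrable_const, hFTC, hγ0, hγ1]
    simp [hF'def, hγ0]
  rw [key]
  have hbound : ∀ s ∈ Set.Ioc (0:ℝ) 1, ‖F' s - F' 0‖ ≤ (L * ‖y - x‖ ^ 2) * s := by
    intro s hs
    have := hF'lip s ⟨hs.1.le, hs.2⟩ 0 ⟨le_refl _, zero_le_one⟩
    simpa [abs_of_nonneg hs.1.le] using this
  have : ‖∫ s in (0:ℝ)..1, (F' s - F' 0)‖ ≤ |∫ s in (0:ℝ)..1, (L * ‖y - x‖ ^ 2) * s| := by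
    refine (intervalIntegral.norm_integral_le_of_norm_le zero_le_one ?_ ?_).trans (le_abs_self _)
    · filter_upwards with s hs
      exact hbound s hs
    · apply Continuous.intervalIntegrable; continuity
  refine this.trans ?_
  rw [intervalIntegral.integral_const_mul]
  rw [integral_id]
  rw [abs_of_nonneg (by positivity)]
  ring_nf
  nlinarith [sq_nonneg ‖y - x‖]

/-- Bound on the convexity defect of a `C¹` function with `L`-Lipschitz derivative. -/
lemma combo_bound {E F : Type*} [NormedAddCommGroup E] [NormedSpace ℝ E]
    [NormedAddCommGroup F] [NormedSpace ℝ F] [CompleteSpace F]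
    {O : Set E} (hconv : Convex ℝ O)
    {g : E → F} {L : ℝ} (hL : 0 ≤ L)
    (hdiff : ∀ z ∈ O, DifferentiableAt ℝ g z)
    (hLip : ∀ x ∈ O, ∀ y ∈ O, ‖fderiv ℝ g x - fderiv ℝ g y‖ ≤ L * ‖x - y‖)
    {x y : E} (hx : x ∈ O) (hy : y ∈ O) {a b : ℝ}
    (ha : 0 ≤ a) (hb : 0 ≤ b) (hab : a + b = 1) :
    ‖a • g x + b • g y - g (a • x + b • y)‖ ≤ L / 2 * (a * b) * ‖x - y‖ ^ 2 := by
  set z := a • x + b • y with hz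
  have hzO : z ∈ O := hconv hx hy ha hb hab
  have hxz : x - z = b • (x - y) := by
    rw [hz]; rw [show b = 1 - a by linarith]; module
  have hyz : y - z = a • (y - x) := by
    rw [hz]; rw [show a = 1 - b by linarith]; module
  have ex := taylor_quad hconv hL hdiff hLip hzO hx
  have ey := taylor_quad hconv hL hdiff hLip hzO hy
  have hcomb : a • g x + b • g y - g z =
      a • (g x - g z - fderiv ℝ g z (x - z)) + b • (g y - g z - fderiv ℝ g z (y - z)) := by
    have h0 : a • (x - z) + b • (y - z) = 0 := by
      rw [hz]; rw [show b = 1 - a by linarith]; module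
    have : fderiv ℝ g z (a • (x - z) + b • (y - z)) = 0 := by rw [h0]; simp
    rw [map_add, _root_.map_smul, _root_.map_smul] at this
    have hgz : (a + b) • g z = g z := by rw [hab, one_smul]
    calc a • g x + b • g y - g z
        = a • (g x - g z - fderiv ℝ g z (x - z)) + b • (g y - g z - fderiv ℝ g z (y - z))
          + (a • (fderiv ℝ g z (x - z)) + b • (fderiv ℝ g z (y - z)))
          + ((a + b) • g z - g z) := by module
      _ = _ := by rw [this, hgz]; abel
  rw [hcomb]
  calc ‖_ + _‖ ≤ a * ‖g x - g z - fderiv ℝ g z (x - z)‖ + b * ‖g y - g z - fderiv ℝ g z (y - z)‖ := by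
        refine (norm_add_le _ _).trans ?_
        rw [norm_smul, norm_smul, Real.norm_eq_abs, Real.norm_eq_abs,
          abs_of_nonneg ha, abs_of_nonneg hb]
    _ ≤ a * (L / 2 * ‖x - z‖ ^ 2) + b * (L / 2 * ‖y - z‖ ^ 2) := by
        gcongr
    _ = L / 2 * (a * b) * ‖x - y‖ ^ 2 := by
        rw [hxz, hyz, norm_smul, norm_smul, Real.norm_eq_abs, Real.norm_eq_abs,
          abs_of_nonneg ha, abs_of_nonneg hb, norm_sub_rev y x]
        linear_combination (L / 2 * a * b * ‖x - y‖ ^ 2) * hab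

/-- Under unit second moments, `E‖ε‖ ≤ √ℓ`, and `‖ε‖` is integrable. -/
lemma first_moment_bound {l : ℕ} (Pε : Measure (EuclideanSpace ℝ (Fin l)))
    [IsProbabilityMeasure Pε]
    (hsq : Integrable (fun ε : EuclideanSpace ℝ (Fin l) => ‖ε‖ ^ 2) Pε)
    (hcov : ∀ i j : Fin l, ∫ ε, ε i * ε j ∂Pε = if i = j then 1 else 0) :
    (∫ ε, ‖ε‖ ∂Pε) ≤ Real.sqrt l ∧
      Integrable (fun ε : EuclideanSpace ℝ (Fin l) => ‖ε‖) Pε := by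
  have hnormsq : ∀ ε : EuclideanSpace ℝ (Fin l), ‖ε‖ ^ 2 = ∑ i, ε i ^ 2 := by
    intro ε
    rw [EuclideanSpace.norm_eq, Real.sq_sqrt (by positivity)]
    simp [Real.norm_eq_abs, sq_abs]
  have hcoordint : ∀ i : Fin l, Integrable (fun ε : EuclideanSpace ℝ (Fin l) => ε i ^ 2) Pε := by
    intro i
    refine hsq.mono' ?_ ?_
    · exact ((continuous_apply i).comp (EuclideanSpace.equiv (Fin l) ℝ).continuous).pow 2
        |>.aestronglyMeasurable
    · filter_upwards with ε
      rw [Real.norm_eq_abs, abs_of_nonneg (sq_nonneg _), hnormsq]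
      exact Finset.single_le_sum (fun j _ => sq_nonneg (ε j)) (Finset.mem_univ i)
  have hEsq : ∫ ε, ‖ε‖ ^ 2 ∂Pε = l := by
    calc ∫ ε, ‖ε‖ ^ 2 ∂Pε = ∫ ε, ∑ i, ε i ^ 2 ∂Pε := by
          exact integral_congr_ae (Filter.Eventually.of_forall hnormsq)
      _ = ∑ i : Fin l, ∫ ε, ε i ^ 2 ∂Pε := integral_finset_sum _ (fun i _ => hcoordint i)
      _ = ∑ i : Fin l, (1 : ℝ) := by
          refine Finset.sum_congr rfl fun i _ => ?_
          have := hcov i i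
          simpa [sq] using this
      _ = l := by simp
  have hnormint : Integrable (fun ε : EuclideanSpace ℝ (Fin l) => ‖ε‖) Pε := by
    refine ((integrable_const (1:ℝ)).add hsq).mono' ?_ ?_
    · exact continuous_norm.aestronglyMeasurable
    · filter_upwards with ε
      rw [Real.norm_eq_abs, abs_of_nonneg (norm_nonneg _)]
      show ‖ε‖ ≤ 1 + ‖ε‖ ^ 2
      nlinarith [sq_nonneg (‖ε‖ - 1), norm_nonneg ε]
  refine ⟨?_, hnormint⟩
  set m := ∫ ε, ‖ε‖ ∂Pε with hm
  have hm0 : 0 ≤ m := integral_nonneg (fun ε => norm_nonneg _)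
  have hvar : 0 ≤ ∫ ε, (‖ε‖ - m) ^ 2 ∂Pε := integral_nonneg (fun ε => sq_nonneg _)
  have hexp : ∫ ε, (‖ε‖ - m) ^ 2 ∂Pε = (l : ℝ) - m ^ 2 := by
    have : ∀ ε : EuclideanSpace ℝ (Fin l), (‖ε‖ - m) ^ 2 = ‖ε‖ ^ 2 - 2 * m * ‖ε‖ + m ^ 2 := by
      intro ε; ring
    have hA : Integrable (fun a : EuclideanSpace ℝ (Fin l) => ‖a‖ ^ 2 - 2 * m * ‖a‖) Pε :=
      hsq.sub (hnormint.const_mul _)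
    rw [integral_congr_ae (Filter.Eventually.of_forall this),
      integral_add hA (integrable_const _),
      integral_sub hsq (hnormint.const_mul (2*m)), MeasureTheory.integral_const_mul, hEsq]
    simp [← hm]
    ring
  have hmsq : m ^ 2 ≤ (l : ℝ) := by linarith [hvar.trans_eq hexp]
  calc m = Real.sqrt (m ^ 2) := (Real.sqrt_sq hm0).symm
    _ ≤ Real.sqrt l := Real.sqrt_le_sqrt hmsq

/-- Convexity defect identity for the squared norm. -/
lemma sq_norm_combo {E : Type*} [NormedAddCommGroup E] [InnerProductSpace ℝ E]
    (x y : E) {a b : ℝ} (hab : a + b = 1) :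
    a * ‖x‖ ^ 2 + b * ‖y‖ ^ 2 - ‖a • x + b • y‖ ^ 2 = a * b * ‖x - y‖ ^ 2 := by
  have e1 : ‖a • x + b • y‖ ^ 2
      = a ^ 2 * ‖x‖ ^ 2 + 2 * (a * b) * ⟪x, y⟫ + b ^ 2 * ‖y‖ ^ 2 := by
    rw [norm_add_sq_real, norm_smul, norm_smul, real_inner_smul_left, real_inner_smul_right]
    simp only [Real.norm_eq_abs, mul_pow, sq_abs]
    ring
  have e2 : ‖x - y‖ ^ 2 = ‖x‖ ^ 2 - 2 * ⟪x, y⟫ + ‖y‖ ^ 2 := norm_sub_sq_real x y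
  rw [e1, e2]
  linear_combination (-(a * ‖x‖ ^ 2 + b * ‖y‖ ^ 2)) * hab

/-- The continuous linear map `ℝ^d → ℝ^ℓ` determined by its `ℓ` rows (as functionals). -/
def rowCLM {d l : ℕ} (rows : Fin l → (EuclideanSpace ℝ (Fin d) →L[ℝ] ℝ)) :
    EuclideanSpace ℝ (Fin d) →L[ℝ] EuclideanSpace ℝ (Fin l) :=
  (((EuclideanSpace.equiv (Fin l) ℝ).symm :
      (Fin l → ℝ) →L[ℝ] EuclideanSpace ℝ (Fin l))).comp (ContinuousLinearMap.pi rows)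

/-- `Q(x)`, the `ℓ×ℓ` matrix whose rows are `q_1(x)ᵀ, …, q_ℓ(x)ᵀ`, viewed as a linear map. -/
def Qop {d l : ℕ} (q : Fin l → EuclideanSpace ℝ (Fin d) → EuclideanSpace ℝ (Fin l))
    (x : EuclideanSpace ℝ (Fin d)) :
    EuclideanSpace ℝ (Fin l) →L[ℝ] EuclideanSpace ℝ (Fin l) :=
  rowCLM (fun j => innerSL ℝ (q j x))

set_option maxHeartbeats 2000000 in
/-- **Proposition 3.** Under Assumption 1 (with `𝒪 ⊆ ℝ^d` convex open, `φ` jointly convex and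
`L_φ`-Lipschitz in the ℓ2 norms, `c` C¹ with `L_c`-Lipschitz Jacobian, each `q_j` C¹ with
`L_q`-Lipschitz Jacobian, and `ε ∼ P_ε` with mean `0` and covariance `I_ℓ`), the objective
`f(x) = E_{ε∼P_ε}[φ(x, c(x) + Q(x)ε)]` is `τ`-weakly convex on `𝒪` with
`τ = L_φ(L_c + ℓ·L_q)`; that is, `x ↦ f(x) + (τ/2)‖x‖²` is convex on `𝒪`. -/
theorem objective_weakly_convex {d l : ℕ}
    (O : Set (EuclideanSpace ℝ (Fin d))) (hOopen : IsOpen O) (hOconv : Convex ℝ O)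
    (φ : EuclideanSpace ℝ (Fin d) → EuclideanSpace ℝ (Fin l) → ℝ)
    (Lφ Lc Lq : ℝ) (hLφ : 0 ≤ Lφ) (hLc : 0 ≤ Lc) (hLq : 0 ≤ Lq)
    (hφconv : ConvexOn ℝ (O ×ˢ (Set.univ : Set (EuclideanSpace ℝ (Fin l))))
      (fun p => φ p.1 p.2))
    (hφlip : ∀ x ∈ O, ∀ y ∈ O, ∀ u v : EuclideanSpace ℝ (Fin l),
      |φ x u - φ y v| ≤ Lφ * Real.sqrt (‖x - y‖ ^ 2 + ‖u - v‖ ^ 2))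
    (c : EuclideanSpace ℝ (Fin d) → EuclideanSpace ℝ (Fin l))
    (hc : ContDiffOn ℝ 1 c O)
    (hcJ : ∀ x ∈ O, ∀ y ∈ O, ‖fderiv ℝ c x - fderiv ℝ c y‖ ≤ Lc * ‖x - y‖)
    (q : Fin l → EuclideanSpace ℝ (Fin d) → EuclideanSpace ℝ (Fin l))
    (hq : ∀ j, ContDiffOn ℝ 1 (q j) O)
    (hqJ : ∀ j, ∀ x ∈ O, ∀ y ∈ O, ‖fderiv ℝ (q j) x - fderiv ℝ (q j) y‖ ≤ Lq * ‖x - y‖)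
    (Pε : Measure (EuclideanSpace ℝ (Fin l))) [IsProbabilityMeasure Pε]
    (hmean : ∫ ε, ε ∂Pε = 0)
    (hsq : Integrable (fun ε : EuclideanSpace ℝ (Fin l) => ‖ε‖ ^ 2) Pε)
    (hcov : ∀ i j : Fin l, ∫ ε, ε i * ε j ∂Pε = if i = j then 1 else 0)
    (hint : ∀ x ∈ O, Integrable (fun ε => φ x (c x + Qop q x ε)) Pε) :
    ConvexOn ℝ O (fun x =>
      (∫ ε, φ x (c x + Qop q x ε) ∂Pε) + Lφ * (Lc + (l : ℝ) * Lq) / 2 * ‖x‖ ^ 2) := by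
  obtain ⟨hmom, hnormint⟩ := first_moment_bound Pε hsq hcov
  refine ⟨hOconv, fun x hx y hy a b ha hb hab => ?_⟩
  set z := a • x + b • y with hzdef
  have hz : z ∈ O := hOconv hx hy ha hb hab
  have hcdiff : ∀ w ∈ O, DifferentiableAt ℝ c w := fun w hw =>
    (hc.differentiableOn one_ne_zero).differentiableAt (hOopen.mem_nhds hw)
  have hqdiff : ∀ j, ∀ w ∈ O, DifferentiableAt ℝ (q j) w := fun j w hw =>
    ((hq j).differentiableOn one_ne_zero).differentiableAt (hOopen.mem_nhds hw)
  have hcb : ‖a • c x + b • c y - c z‖ ≤ Lc / 2 * (a * b) * ‖x - y‖ ^ 2 :=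
    combo_bound hOconv hLc hcdiff hcJ hx hy ha hb hab
  have hqb : ∀ j, ‖a • q j x + b • q j y - q j z‖ ≤ Lq / 2 * (a * b) * ‖x - y‖ ^ 2 :=
    fun j => combo_bound hOconv hLq (hqdiff j) (hqJ j) hx hy ha hb hab
  set K1 : ℝ := Lφ * (Lc / 2 * (a * b) * ‖x - y‖ ^ 2) with hK1
  set K2 : ℝ := Lφ * Real.sqrt l * (Lq / 2 * (a * b) * ‖x - y‖ ^ 2) with hK2
  -- pointwise bound
  have hpt : ∀ ε : EuclideanSpace ℝ (Fin l),
      φ z (c z + Qop q z ε) ≤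
        (a * φ x (c x + Qop q x ε) + b * φ y (c y + Qop q y ε)) + (K1 + K2 * ‖ε‖) := by
    intro ε
    set u := c x + Qop q x ε with hu
    set v := c y + Qop q y ε with hv
    set w := c z + Qop q z ε with hw
    set mid := a • u + b • v with hmid
    have hconv2 : φ z mid ≤ a * φ x u + b * φ y v := by
      have := hφconv.2 (Set.mk_mem_prod hx (Set.mem_univ u))
        (Set.mk_mem_prod hy (Set.mem_univ v)) ha hb hab
      simpa [Prod.smul_mk, Prod.mk_add_mk, smul_eq_mul] using this
    have hlip2 : φ z w - φ z mid ≤ Lφ * ‖w - mid‖ := by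
      have h := hφlip z hz z hz w mid
      have h0 : z - z = 0 := sub_self z
      rw [h0] at h
      simp only [norm_zero] at h
      have : Real.sqrt (0 ^ 2 + ‖w - mid‖ ^ 2) = ‖w - mid‖ := by
        rw [show (0:ℝ) ^ 2 + ‖w - mid‖ ^ 2 = ‖w - mid‖ ^ 2 by ring,
          Real.sqrt_sq (norm_nonneg _)]
      rw [this] at h
      exact (le_abs_self _).trans h
    -- bound on ‖w - mid‖
    have hQcomp : ∀ j : Fin l,
        |(Qop q z ε - (a • Qop q x ε + b • Qop q y ε)) j|
          ≤ (Lq / 2 * (a * b) * ‖x - y‖ ^ 2) * ‖ε‖ := by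
      intro j
      have hco : (Qop q z ε - (a • Qop q x ε + b • Qop q y ε)) j
          = ⟪q j z - (a • q j x + b • q j y), ε⟫ := by
        simp only [PiLp.sub_apply, PiLp.add_apply, PiLp.smul_apply, smul_eq_mul]
        have hcoord : ∀ w : EuclideanSpace ℝ (Fin d), (Qop q w ε) j = ⟪q j w, ε⟫ := by
          intro w; rfl
        rw [hcoord, hcoord, hcoord, inner_sub_left, inner_add_left,
          real_inner_smul_left, real_inner_smul_left]
      rw [hco]
      calc |⟪q j z - (a • q j x + b • q j y), ε⟫|
          ≤ ‖q j z - (a • q j x + b • q j y)‖ * ‖ε‖ := abs_real_inner_le_norm _ _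
        _ ≤ (Lq / 2 * (a * b) * ‖x - y‖ ^ 2) * ‖ε‖ := by
            have := hqb j
            rw [← norm_neg (q j z - (a • q j x + b • q j y))] at *
            gcongr
            simpa [neg_sub] using this
    have hQnorm : ‖Qop q z ε - (a • Qop q x ε + b • Qop q y ε)‖
        ≤ Real.sqrt l * ((Lq / 2 * (a * b) * ‖x - y‖ ^ 2) * ‖ε‖) := by
      set B := (Lq / 2 * (a * b) * ‖x - y‖ ^ 2) * ‖ε‖ with hB
      have hB0 : 0 ≤ B := by positivity
      rw [EuclideanSpace.norm_eq]
      calc Real.sqrt (∑ j, ‖(Qop q z ε - (a • Qop q x ε + b • Qop q y ε)) j‖ ^ 2)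
          ≤ Real.sqrt (∑ _j : Fin l, B ^ 2) := by
            apply Real.sqrt_le_sqrt
            apply Finset.sum_le_sum
            intro j _
            have := hQcomp j
            rw [Real.norm_eq_abs]
            nlinarith [abs_nonneg ((Qop q z ε - (a • Qop q x ε + b • Qop q y ε)) j)]
        _ = Real.sqrt (l * B ^ 2) := by rw [Finset.sum_const]; simp [mul_comm]
        _ = Real.sqrt l * B := by
            rw [Real.sqrt_mul (Nat.cast_nonneg l), Real.sqrt_sq hB0]
    have hwm : ‖w - mid‖ ≤ Lc / 2 * (a * b) * ‖x - y‖ ^ 2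
        + Real.sqrt l * ((Lq / 2 * (a * b) * ‖x - y‖ ^ 2) * ‖ε‖) := by
      have hsplit : w - mid = (c z - (a • c x + b • c y))
          + (Qop q z ε - (a • Qop q x ε + b • Qop q y ε)) := by
        rw [hw, hmid, hu, hv]
        module
      rw [hsplit]
      refine (norm_add_le _ _).trans ?_
      gcongr
      rw [← norm_neg]
      simpa [neg_sub] using hcb
    calc φ z w ≤ φ z mid + Lφ * ‖w - mid‖ := by linarith
      _ ≤ (a * φ x u + b * φ y v) + Lφ * (Lc / 2 * (a * b) * ‖x - y‖ ^ 2
            + Real.sqrt l * ((Lq / 2 * (a * b) * ‖x - y‖ ^ 2) * ‖ε‖)) := by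
          have := mul_le_mul_of_nonneg_left hwm hLφ
          linarith
      _ = (a * φ x u + b * φ y v) + (K1 + K2 * ‖ε‖) := by rw [hK1, hK2]; ring
  -- integrate the pointwise bound
  have i1 : Integrable (fun ε : EuclideanSpace ℝ (Fin l) =>
      a * φ x (c x + Qop q x ε) + b * φ y (c y + Qop q y ε)) Pε :=
    ((hint x hx).const_mul a).add ((hint y hy).const_mul b)
  have i2 : Integrable (fun ε : EuclideanSpace ℝ (Fin l) => K1 + K2 * ‖ε‖) Pε :=
    (integrable_const K1).add (hnormint.const_mul K2)
  have hmono : ∫ ε, φ z (c z + Qop q z ε) ∂Pε ≤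
      ∫ ε, ((a * φ x (c x + Qop q x ε) + b * φ y (c y + Qop q y ε)) + (K1 + K2 * ‖ε‖)) ∂Pε :=
    integral_mono (hint z hz) (i1.add i2) hpt
  have hRHS : ∫ ε, ((a * φ x (c x + Qop q x ε) + b * φ y (c y + Qop q y ε))
        + (K1 + K2 * ‖ε‖)) ∂Pε
      = (a * ∫ ε, φ x (c x + Qop q x ε) ∂Pε + b * ∫ ε, φ y (c y + Qop q y ε) ∂Pε)
        + (K1 + K2 * ∫ ε, ‖ε‖ ∂Pε) := by
    rw [integral_add i1 i2,
      integral_add ((hint x hx).const_mul a) ((hint y hy).const_mul b),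
      integral_add (integrable_const K1) (hnormint.const_mul K2),
      MeasureTheory.integral_const_mul, MeasureTheory.integral_const_mul]
    simp [MeasureTheory.integral_const_mul]
  -- conclude
  have hK20 : 0 ≤ K2 := by positivity
  have hKbound : K1 + K2 * ∫ ε, ‖ε‖ ∂Pε
      ≤ Lφ * (Lc + (l : ℝ) * Lq) / 2 * (a * b * ‖x - y‖ ^ 2) := by
    have h2 : K2 * ∫ ε, ‖ε‖ ∂Pε ≤ K2 * Real.sqrt l := mul_le_mul_of_nonneg_left hmom hK20
    have hll : Real.sqrt l * Real.sqrt l = (l : ℝ) :=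
      Real.mul_self_sqrt (Nat.cast_nonneg l)
    have : K2 * Real.sqrt l = Lφ * ((l : ℝ) * Lq) / 2 * (a * b * ‖x - y‖ ^ 2) := by
      rw [hK2]
      linear_combination (Lφ * Lq / 2 * (a * b * ‖x - y‖ ^ 2)) * hll
    rw [hK1]
    nlinarith [this, h2]
  have hfz : ∫ ε, φ z (c z + Qop q z ε) ∂Pε
      ≤ (a * ∫ ε, φ x (c x + Qop q x ε) ∂Pε + b * ∫ ε, φ y (c y + Qop q y ε) ∂Pε)
        + Lφ * (Lc + (l : ℝ) * Lq) / 2 * (a * b * ‖x - y‖ ^ 2) := by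
    calc ∫ ε, φ z (c z + Qop q z ε) ∂Pε
        ≤ (a * ∫ ε, φ x (c x + Qop q x ε) ∂Pε + b * ∫ ε, φ y (c y + Qop q y ε) ∂Pε)
          + (K1 + K2 * ∫ ε, ‖ε‖ ∂Pε) := by rw [← hRHS]; exact hmono
      _ ≤ _ := by linarith
  set C : ℝ := Lφ * (Lc + (l : ℝ) * Lq) / 2 with hC
  have hC0 : 0 ≤ C := by positivity
  have hid : a * ‖x‖ ^ 2 + b * ‖y‖ ^ 2 - ‖z‖ ^ 2 = a * b * ‖x - y‖ ^ 2 :=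
    sq_norm_combo x y hab
  simp only [smul_eq_mul]
  have hCid : C * (a * ‖x‖ ^ 2 + b * ‖y‖ ^ 2 - ‖z‖ ^ 2) = C * (a * b * ‖x - y‖ ^ 2) := by
    rw [hid]
  nlinarith [hfz, hCid]
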